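/- For m, n ≥ 4, the set D1 = {(i,2) : 1 ≤ i ≤ n} ∪ {(i,m−1) : 1 ≤ i ≤ n} ∪ {(2,j) : 3 ≤ j ≤ m−2} ∪ {(i, 3k+2) : 3 ≤ i ≤ n, 1 ≤ k ≤ ⌊(m−4)/3⌋} is a connected dominating set of the n × m grid G_{n,m}. -/

import Mathlib

open Finset

/-- The infinite grid graph on `ℤ × ℤ`: two points are adjacent iff their
Manhattan distance is `1`. -/
def GridZ : SimpleGraph (ℤ × ℤ) where
  Adj u v := |u.1 - v.1| + |u.2 - v.2| = 1
  symm := by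
    constructor
    intro u v h
    rw [abs_sub_comm v.1 u.1, abs_sub_comm v.2 u.2]
    exact h
  loopless := by
    constructor
    intro u h
    simp at h

/-- The vertex set `[1,n] × [1,m]` of the `n × m` grid graph `G_{n,m}`. -/
def box (n m : ℕ) : Set (ℤ × ℤ) :=
  {p | 1 ≤ p.1 ∧ p.1 ≤ (n : ℤ) ∧ 1 ≤ p.2 ∧ p.2 ≤ (m : ℤ)}

instance (n m : ℕ) (p : ℤ × ℤ) : Decidable (p ∈ box n m) :=
  inferInstanceAs (Decidable (1 ≤ p.1 ∧ p.1 ≤ (n : ℤ) ∧ 1 ≤ p.2 ∧ p.2 ≤ (m : ℤ)))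

/-- `S` is a connected dominating set of the grid `G_{n,m}`:
`S ⊆ [1,n] × [1,m]`, the induced subgraph on `S` is connected, and every
vertex of the grid is in `S` or adjacent to a vertex of `S`. -/
def IsCDS (n m : ℕ) (S : Finset (ℤ × ℤ)) : Prop :=
  (S : Set (ℤ × ℤ)) ⊆ box n m ∧
    (GridZ.induce (S : Set (ℤ × ℤ))).Connected ∧
    ∀ v ∈ box n m, ∃ u ∈ S, u = v ∨ GridZ.Adj u v

/-- The closed neighbourhood of a vertex in the (enlarged) grid. -/
def closedNbr (v : ℤ × ℤ) : Finset (ℤ × ℤ) :=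
  {v, (v.1 + 1, v.2), (v.1 - 1, v.2), (v.1, v.2 + 1), (v.1, v.2 - 1)}

/-- The closed neighbourhood `N_{G'}[S]` of `S` in the enlarged grid `G'`. -/
def closedN (S : Finset (ℤ × ℤ)) : Finset (ℤ × ℤ) :=
  S.biUnion closedNbr

/-- The loss function `ℓ(S) = Σ_{v ∈ N_{G'}[S]} (|N_{G'}[v] ∩ S| - 1)`. -/
def loss (S : Finset (ℤ × ℤ)) : ℕ :=
  ∑ v ∈ closedN S, ((closedNbr v ∩ S).card - 1)

/-- The boundary of `G_{n,m}`: vertices of the grid with degree at most 3. -/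
def boundary (n m : ℕ) : Set (ℤ × ℤ) :=
  {p | p ∈ box n m ∧ (((closedNbr p).erase p).filter (· ∈ box n m)).card ≤ 3}

instance (n m : ℕ) (p : ℤ × ℤ) : Decidable (p ∈ boundary n m) :=
  inferInstanceAs
    (Decidable (p ∈ box n m ∧ (((closedNbr p).erase p).filter (· ∈ box n m)).card ≤ 3))

/-- The excess `e(S)`: the number of points of `S` on the boundary of the grid. -/
def excess (n m : ℕ) (S : Finset (ℤ × ℤ)) : ℕ :=
  (S.filter (fun p => p ∈ boundary n m)).card

/-- The four corners of `G_{n,m}`. -/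
def corners (n m : ℕ) : Set (ℤ × ℤ) :=
  {((1 : ℤ), (1 : ℤ)), ((1 : ℤ), (m : ℤ)), ((n : ℤ), (1 : ℤ)), ((n : ℤ), (m : ℤ))}

/-- The degree of a vertex `v` in the induced subgraph `G[S]`. -/
def degS (S : Finset (ℤ × ℤ)) (v : ℤ × ℤ) : ℕ :=
  (((closedNbr v).erase v) ∩ S).card

/-- The number of leaves (degree-1 vertices) of `G[S]`. -/
def numLeaves (S : Finset (ℤ × ℤ)) : ℕ := (S.filter (fun v => degS S v = 1)).card

/-- The number of degree-3 vertices of `G[S]`. -/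
def numDeg3 (S : Finset (ℤ × ℤ)) : ℕ := (S.filter (fun v => degS S v = 3)).card

/-- The number of degree-4 vertices of `G[S]`. -/
def numDeg4 (S : Finset (ℤ × ℤ)) : ℕ := (S.filter (fun v => degS S v = 4)).card

/-- A bend: a degree-2 vertex of `G[S]` having one vertical and one horizontal
neighbour in `S`. -/
def IsBend (S : Finset (ℤ × ℤ)) (v : ℤ × ℤ) : Prop :=
  degS S v = 2 ∧ ((v.1 + 1, v.2) ∈ S ∨ (v.1 - 1, v.2) ∈ S) ∧
    ((v.1, v.2 + 1) ∈ S ∨ (v.1, v.2 - 1) ∈ S)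

instance (S : Finset (ℤ × ℤ)) (v : ℤ × ℤ) : Decidable (IsBend S v) :=
  inferInstanceAs (Decidable (_ ∧ _ ∧ _))

/-- The number of bends of `G[S]`. -/
def numBends (S : Finset (ℤ × ℤ)) : ℕ := (S.filter (fun v => IsBend S v)).card

/-- The connected domination number `γ_c(G_{n,m})`. -/
noncomputable def connDomNum (n m : ℕ) : ℕ :=
  sInf {k | ∃ S : Finset (ℤ × ℤ), IsCDS n m S ∧ S.card = k}

/-- A maximal horizontal line segment of `G[S]`: the vertices `(i,a),…,(i,b)`
all lie in `S`, and the segment cannot be extended in row `i`. -/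
def IsMaxHSeg (S : Finset (ℤ × ℤ)) (i a b : ℤ) : Prop :=
  a ≤ b ∧ (∀ j, a ≤ j → j ≤ b → (i, j) ∈ S) ∧ (i, a - 1) ∉ S ∧ (i, b + 1) ∉ S

/-- A maximal vertical line segment of `G[S]`: the vertices `(a,j),…,(b,j)`
all lie in `S`, and the segment cannot be extended in column `j`. -/
def IsMaxVSeg (S : Finset (ℤ × ℤ)) (j a b : ℤ) : Prop :=
  a ≤ b ∧ (∀ i, a ≤ i → i ≤ b → (i, j) ∈ S) ∧ (a - 1, j) ∉ S ∧ (b + 1, j) ∉ S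

/-- Fujie's construction `D1`. -/
noncomputable def D1 (n m : ℕ) : Finset (ℤ × ℤ) :=
  ((Finset.Icc (1 : ℤ) (n : ℤ)).image fun i => (i, (2 : ℤ))) ∪
    ((Finset.Icc (1 : ℤ) (n : ℤ)).image fun i => (i, (m : ℤ) - 1)) ∪
    ((Finset.Icc (3 : ℤ) ((m : ℤ) - 2)).image fun j => ((2 : ℤ), j)) ∪
    (((Finset.Icc (3 : ℤ) (n : ℤ)) ×ˢ
        (Finset.Icc (1 : ℤ) (((m - 4) / 3 : ℕ) : ℤ))).image fun p => (p.1, 3 * p.2 + 2))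

lemma mem_D1 (n m : ℕ) (p : ℤ × ℤ) : p ∈ D1 n m ↔
    (1 ≤ p.1 ∧ p.1 ≤ (n:ℤ) ∧ p.2 = 2) ∨
    (1 ≤ p.1 ∧ p.1 ≤ (n:ℤ) ∧ p.2 = (m:ℤ) - 1) ∨
    (p.1 = 2 ∧ 3 ≤ p.2 ∧ p.2 ≤ (m:ℤ) - 2) ∨
    (3 ≤ p.1 ∧ p.1 ≤ (n:ℤ) ∧ ∃ k : ℤ, 1 ≤ k ∧ k ≤ (((m - 4) / 3 : ℕ) : ℤ) ∧ p.2 = 3 * k + 2) := by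
  obtain ⟨x, y⟩ := p
  simp only [D1, Finset.mem_union, Finset.mem_image, Finset.mem_Icc, Finset.mem_product,
    Prod.ext_iff, Prod.exists]
  constructor
  · rintro (((⟨i, hi, h1, h2⟩ | ⟨i, hi, h1, h2⟩) | ⟨j, hj, h1, h2⟩) | ⟨a, b, ⟨ha, hb⟩, h1, h2⟩)
    · exact Or.inl ⟨by omega, by omega, h2.symm⟩
    · exact Or.inr (Or.inl ⟨by omega, by omega, h2.symm⟩)
    · exact Or.inr (Or.inr (Or.inl ⟨h1.symm, by omega, by omega⟩))
    · exact Or.inr (Or.inr (Or.inr ⟨by omega, by omega, b, hb.1, hb.2, h2.symm⟩))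
  · rintro (⟨h1, h2, h3⟩ | ⟨h1, h2, h3⟩ | ⟨h1, h2, h3⟩ | ⟨h1, h2, k, hk1, hk2, h3⟩)
    · exact Or.inl (Or.inl (Or.inl ⟨x, ⟨h1, h2⟩, rfl, h3.symm⟩))
    · exact Or.inl (Or.inl (Or.inr ⟨x, ⟨h1, h2⟩, rfl, h3.symm⟩))
    · exact Or.inl (Or.inr ⟨y, ⟨h2, h3⟩, h1.symm, rfl⟩)
    · exact Or.inr ⟨x, k, ⟨⟨h1, h2⟩, hk1, hk2⟩, rfl, h3.symm⟩

lemma grid_adj_vert (b j : ℤ) : GridZ.Adj (b, j) (b + 1, j) := by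
  show |b - (b+1)| + |j - j| = 1
  simp only [Int.abs_eq_natAbs]
  omega

lemma grid_adj_horiz (i b : ℤ) : GridZ.Adj (i, b) (i, b + 1) := by
  show |i - i| + |b - (b+1)| = 1
  simp only [Int.abs_eq_natAbs]
  omega

lemma reach_vert (S : Finset (ℤ × ℤ)) (j a : ℤ) :
    ∀ b, a ≤ b → (∀ i, a ≤ i → i ≤ b → (i, j) ∈ S) →
    ∀ (ha : (a, j) ∈ (S : Set (ℤ × ℤ))) (hb : (b, j) ∈ (S : Set (ℤ × ℤ))),
    (GridZ.induce (S : Set (ℤ × ℤ))).Reachable ⟨(a, j), ha⟩ ⟨(b, j), hb⟩ := by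
  intro b hb
  refine Int.le_induction (motive := fun b _ => (∀ i, a ≤ i → i ≤ b → (i, j) ∈ S) →
    ∀ (ha : (a, j) ∈ (S : Set (ℤ × ℤ))) (hb : (b, j) ∈ (S : Set (ℤ × ℤ))),
    (GridZ.induce (S : Set (ℤ × ℤ))).Reachable ⟨(a, j), ha⟩ ⟨(b, j), hb⟩)
    ?_ ?_ b hb
  · intro _ _ _; exact SimpleGraph.Reachable.refl _
  · intro b hab ih h ha hb'
    have hbm : (b, j) ∈ (S : Set (ℤ × ℤ)) := h b hab (by omega)
    exact (ih (fun i h1 h2 => h i h1 (by omega)) ha hbm).trans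
      (SimpleGraph.Adj.reachable (grid_adj_vert b j))

lemma reach_horiz (S : Finset (ℤ × ℤ)) (i a : ℤ) :
    ∀ b, a ≤ b → (∀ j, a ≤ j → j ≤ b → (i, j) ∈ S) →
    ∀ (ha : (i, a) ∈ (S : Set (ℤ × ℤ))) (hb : (i, b) ∈ (S : Set (ℤ × ℤ))),
    (GridZ.induce (S : Set (ℤ × ℤ))).Reachable ⟨(i, a), ha⟩ ⟨(i, b), hb⟩ := by
  intro b hb
  refine Int.le_induction (motive := fun b _ => (∀ j, a ≤ j → j ≤ b → (i, j) ∈ S) →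
    ∀ (ha : (i, a) ∈ (S : Set (ℤ × ℤ))) (hb : (i, b) ∈ (S : Set (ℤ × ℤ))),
    (GridZ.induce (S : Set (ℤ × ℤ))).Reachable ⟨(i, a), ha⟩ ⟨(i, b), hb⟩)
    ?_ ?_ b hb
  · intro _ _ _; exact SimpleGraph.Reachable.refl _
  · intro b hab ih h ha hb'
    have hbm : (i, b) ∈ (S : Set (ℤ × ℤ)) := h b hab (by omega)
    exact (ih (fun j h1 h2 => h j h1 (by omega)) ha hbm).trans
      (SimpleGraph.Adj.reachable (grid_adj_horiz i b))

lemma div3_fact (m : ℕ) (hm : 4 ≤ m) : 3 * (((m - 4) / 3 : ℕ) : ℤ) ≤ (m : ℤ) - 4 := by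
  omega

lemma base_mem (n m : ℕ) (hn : 4 ≤ n) (hm : 4 ≤ m) : ((2:ℤ), (2:ℤ)) ∈ D1 n m := by
  rw [mem_D1]; exact Or.inl ⟨by omega, by omega, rfl⟩

lemma row2_mem (n m : ℕ) (hn : 4 ≤ n) (hm : 4 ≤ m) :
    ∀ j : ℤ, 2 ≤ j → j ≤ (m:ℤ) - 1 → ((2:ℤ), j) ∈ D1 n m := by
  intro j h1 h2
  rw [mem_D1]
  by_cases hj2 : j = 2
  · exact Or.inl ⟨by omega, by omega, hj2⟩
  by_cases hjm : j = (m:ℤ) - 1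
  · exact Or.inr (Or.inl ⟨by omega, by omega, hjm⟩)
  · exact Or.inr (Or.inr (Or.inl ⟨rfl, by omega, by omega⟩))

lemma reach_base (n m : ℕ) (hn : 4 ≤ n) (hm : 4 ≤ m) :
    ∀ p (hp : p ∈ ((D1 n m : Finset (ℤ × ℤ)) : Set (ℤ × ℤ))),
    (GridZ.induce ((D1 n m : Finset (ℤ × ℤ)) : Set (ℤ × ℤ))).Reachable ⟨p, hp⟩
      ⟨((2:ℤ), (2:ℤ)), base_mem n m hn hm⟩ := by
  have hK := div3_fact m hm
  -- reach from (2,2) to (2,j) along row 2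
  have hrow : ∀ j : ℤ, (h2j : 2 ≤ j) → (hj : j ≤ (m:ℤ) - 1) →
      (GridZ.induce ((D1 n m : Finset (ℤ × ℤ)) : Set (ℤ × ℤ))).Reachable
        ⟨((2:ℤ), (2:ℤ)), base_mem n m hn hm⟩ ⟨((2:ℤ), j), row2_mem n m hn hm j h2j hj⟩ := by
    intro j h1 h2
    exact reach_horiz (D1 n m) 2 2 j h1
      (fun j' a b => row2_mem n m hn hm j' a (by omega)) _ _
  intro p hp
  obtain ⟨x, y⟩ := p
  have hp' := hp
  rw [Finset.mem_coe, mem_D1] at hp'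
  rcases hp' with ⟨h1, h2, h3⟩ | ⟨h1, h2, h3⟩ | ⟨h1, h2, h3⟩ | ⟨h1, h2, k, hk1, hk2, h3⟩
  · -- column 2
    subst h3
    have hcol : ∀ i : ℤ, 1 ≤ i → i ≤ (n:ℤ) → (i, (2:ℤ)) ∈ D1 n m := by
      intro i a b; rw [mem_D1]; exact Or.inl ⟨a, b, rfl⟩
    rcases le_total x 2 with hx | hx
    · exact reach_vert (D1 n m) 2 x 2 hx (fun i a b => hcol i (by omega) (by omega)) _ _
    · exact (reach_vert (D1 n m) 2 2 x hx (fun i a b => hcol i (by omega) (by omega)) _ _).symm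
  · -- column m-1
    subst h3
    have hcol : ∀ i : ℤ, 1 ≤ i → i ≤ (n:ℤ) → (i, (m:ℤ) - 1) ∈ D1 n m := by
      intro i a b; rw [mem_D1]; exact Or.inr (Or.inl ⟨a, b, rfl⟩)
    have h2m : ((2:ℤ), (m:ℤ) - 1) ∈ ((D1 n m : Finset (ℤ × ℤ)) : Set (ℤ × ℤ)) :=
      hcol 2 (by omega) (by omega)
    have step : (GridZ.induce ((D1 n m : Finset (ℤ × ℤ)) : Set (ℤ × ℤ))).Reachable
        ⟨(x, (m:ℤ) - 1), hp⟩ ⟨((2:ℤ), (m:ℤ) - 1), h2m⟩ := by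
      rcases le_total x 2 with hx | hx
      · exact reach_vert (D1 n m) ((m:ℤ)-1) x 2 hx (fun i a b => hcol i (by omega) (by omega)) _ _
      · exact (reach_vert (D1 n m) ((m:ℤ)-1) 2 x hx
          (fun i a b => hcol i (by omega) (by omega)) _ _).symm
    exact step.trans (hrow ((m:ℤ)-1) (by omega) (by omega)).symm
  · -- row 2
    subst h1
    exact (hrow y (by omega) (by omega)).symm
  · -- vertical columns
    subst h3
    have hcol : ∀ i : ℤ, 2 ≤ i → i ≤ (n:ℤ) → (i, 3*k+2) ∈ D1 n m := by
      intro i a b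
      rw [mem_D1]
      by_cases hi2 : i = 2
      · exact Or.inr (Or.inr (Or.inl ⟨hi2, by omega, by omega⟩))
      · exact Or.inr (Or.inr (Or.inr ⟨by omega, b, k, hk1, hk2, rfl⟩))
    have h2c : ((2:ℤ), 3*k+2) ∈ ((D1 n m : Finset (ℤ × ℤ)) : Set (ℤ × ℤ)) :=
      hcol 2 le_rfl (by omega)
    have step : (GridZ.induce ((D1 n m : Finset (ℤ × ℤ)) : Set (ℤ × ℤ))).Reachable
        ⟨((2:ℤ), 3*k+2), h2c⟩ ⟨(x, 3*k+2), hp⟩ :=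
      reach_vert (D1 n m) (3*k+2) 2 x (by omega) (fun i a b => hcol i a (by omega)) _ _
    have base : (GridZ.induce ((D1 n m : Finset (ℤ × ℤ)) : Set (ℤ × ℤ))).Reachable
        ⟨((2:ℤ), (2:ℤ)), base_mem n m hn hm⟩ ⟨((2:ℤ), 3*k+2), h2c⟩ :=
      hrow (3*k+2) (by omega) (by omega)
    exact (base.trans step).symm

/-- For `m, n ≥ 4`, Fujie's construction `D1` is a connected
dominating set of `G_{n,m}`. -/
theorem D1_isCDS (n m : ℕ) (hn : 4 ≤ n) (hm : 4 ≤ m) : IsCDS n m (D1 n m) := by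
  have hK := div3_fact m hm
  refine ⟨?_, ?_, ?_⟩
  · -- subset of box
    intro p hp
    rw [Finset.mem_coe, mem_D1] at hp
    show 1 ≤ p.1 ∧ p.1 ≤ (n:ℤ) ∧ 1 ≤ p.2 ∧ p.2 ≤ (m:ℤ)
    rcases hp with ⟨h1, h2, h3⟩ | ⟨h1, h2, h3⟩ | ⟨h1, h2, h3⟩ | ⟨h1, h2, k, hk1, hk2, h3⟩ <;>
      refine ⟨by omega, by omega, by omega, by omega⟩
  · -- connected
    rw [SimpleGraph.connected_iff]
    refine ⟨?_, ⟨⟨((2:ℤ), (2:ℤ)), base_mem n m hn hm⟩⟩⟩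
    rintro ⟨u, hu⟩ ⟨v, hv⟩
    exact (reach_base n m hn hm u hu).trans (reach_base n m hn hm v hv).symm
  · -- dominating
    rintro ⟨i, j⟩ ⟨h1, h2, h3, h4⟩
    simp only at h1 h2 h3 h4
    by_cases hj3 : j ≤ 3
    · refine ⟨(i, 2), by rw [mem_D1]; exact Or.inl ⟨h1, h2, rfl⟩, ?_⟩
      by_cases hj2 : j = 2
      · exact Or.inl (by rw [hj2])
      · refine Or.inr ?_
        show |i - i| + |2 - j| = 1
        simp only [Int.abs_eq_natAbs]
        omega
    by_cases hjm : (m:ℤ) - 2 ≤ j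
    · refine ⟨(i, (m:ℤ) - 1), by rw [mem_D1]; exact Or.inr (Or.inl ⟨h1, h2, rfl⟩), ?_⟩
      by_cases hj2 : j = (m:ℤ) - 1
      · exact Or.inl (by rw [hj2])
      · refine Or.inr ?_
        show |i - i| + |(m:ℤ) - 1 - j| = 1
        simp only [Int.abs_eq_natAbs]
        omega
    -- now 4 ≤ j ≤ m - 3
    by_cases hi : i ≤ 2
    · by_cases hi2 : i = 2
      · exact ⟨(2, j), by rw [mem_D1]; exact Or.inr (Or.inr (Or.inl ⟨rfl, by omega, by omega⟩)),
          Or.inl (by rw [hi2])⟩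
      · refine ⟨(2, j), by rw [mem_D1]; exact Or.inr (Or.inr (Or.inl ⟨rfl, by omega, by omega⟩)),
          Or.inr ?_⟩
        show |(2:ℤ) - i| + |j - j| = 1
        simp only [Int.abs_eq_natAbs]
        omega
    · -- i ≥ 3, use vertical column k = (j-1)/3
      refine ⟨(i, 3 * ((j - 1) / 3) + 2), by rw [mem_D1]; exact Or.inr (Or.inr (Or.inr
        ⟨by omega, h2, (j-1)/3, by omega, by omega, rfl⟩)), ?_⟩
      by_cases hje : 3 * ((j - 1) / 3) + 2 = j
      · exact Or.inl (by rw [hje])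
      · refine Or.inr ?_
        show |i - i| + |3 * ((j - 1) / 3) + 2 - j| = 1
        simp only [Int.abs_eq_natAbs]
        omega
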